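/- Let H be a complex Hilbert space, P an orthogonal projection on H, and let t ↦ U(t), t ∈ [0,1], be a family of unitary operators on H that is continuous in operator norm. Suppose Φ(t) := U(t)*PU(t) − P is compact for every t ∈ [0,1]. Then ker(Φ(t) − 1) and ker(Φ(t) + 1) are finite-dimensional for each t, and the integer-valued index t ↦ ind(Φ(t)) := dim ker(Φ(t) − 1) − dim ker(Φ(t) + 1) is constant on [0,1]. -/

import Mathlib

open ContinuousLinearMap Submodule Metric
open scoped InnerProductSpace ComplexConjugate Pointwise

section Helpers
variable {H : Type*} [NormedAddCommGroup H] [InnerProductSpace ℂ H] [CompleteSpace H]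


lemma fd_of_compact_eigen (K : H →L[ℂ] H) (hK : IsCompactOperator K) (c : ℂ) (hc : c ≠ 0)
    (N : Submodule ℂ H) (hNc : IsClosed (N : Set H)) (hx : ∀ x ∈ N, K x = c • x) :
    FiniteDimensional ℂ N := by
  obtain ⟨C, hCcpt, hC⟩ := hK.image_closedBall_subset_compact (𝕜₁ := ℂ) (f := K.toLinearMap) 1
  have hCs : IsCompact (c⁻¹ • C) := hCcpt.smul c⁻¹
  have hsub : (Subtype.val '' closedBall (0 : N) 1 : Set H) ⊆ c⁻¹ • C := by
    rintro x ⟨⟨y, hyN⟩, hy, rfl⟩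
    have hyb : (y : H) ∈ closedBall (0 : H) 1 := by
      simpa [Metric.mem_closedBall, dist_eq_norm] using mem_closedBall_zero_iff.mp hy
    have : K y ∈ C := hC ⟨y, hyb, rfl⟩
    refine ⟨K y, this, ?_⟩
    show c⁻¹ • K y = y
    rw [hx y hyN, smul_smul, inv_mul_cancel₀ hc, one_smul]
  have himg : IsCompact (Subtype.val '' closedBall (0 : N) 1 : Set H) := by
    refine hCs.of_isClosed_subset ?_ hsub
    have : (Subtype.val '' closedBall (0 : N) 1 : Set H) = ↑N ∩ closedBall (0 : H) 1 := by
      ext x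
      constructor
      · rintro ⟨⟨y, hyN⟩, hy, rfl⟩
        exact ⟨hyN, by simpa [mem_closedBall, dist_eq_norm] using mem_closedBall_zero_iff.mp hy⟩
      · rintro ⟨hxN, hxb⟩
        exact ⟨⟨x, hxN⟩, by simpa [mem_closedBall_zero_iff] using mem_closedBall_zero_iff.mp hxb, rfl⟩
    rw [this]
    exact hNc.inter isClosed_closedBall
  have hball : IsCompact (closedBall (0 : N) 1) := by
    rw [Topology.IsEmbedding.isCompact_iff (Topology.IsEmbedding.subtypeVal)]
    exact himg
  exact FiniteDimensional.of_isCompact_closedBall₀ ℂ one_pos hball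



lemma ker_adjoint_eq_orth (A : H →L[ℂ] H) :
    LinearMap.ker ((adjoint A : H →L[ℂ] H) : H →ₗ[ℂ] H) = (LinearMap.range ((A : H →L[ℂ] H) : H →ₗ[ℂ] H))ᗮ := by
  ext x
  rw [LinearMap.mem_ker, ContinuousLinearMap.coe_coe, Submodule.mem_orthogonal]
  constructor
  · rintro h u ⟨y, rfl⟩
    have : (inner ℂ x (A y) : ℂ) = 0 := by
      rw [← adjoint_inner_left, h, inner_zero_left]
    simpa using congrArg (starRingEnd ℂ) this
  · intro h
    have h0 : (inner ℂ (adjoint A x) (adjoint A x) : ℂ) = 0 := by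
      rw [adjoint_inner_left]
      have := h (A (adjoint A x)) ⟨adjoint A x, rfl⟩
      simpa using congrArg (starRingEnd ℂ) this
    exact inner_self_eq_zero.mp h0

lemma range_eq_orth_of_compact (A K : H →L[ℂ] H) (hK : IsCompactOperator K)
    (hAK : adjoint A * A = 1 + K) :
    LinearMap.range ((A : H →L[ℂ] H) : H →ₗ[ℂ] H) = (LinearMap.ker ((adjoint A : H →L[ℂ] H) : H →ₗ[ℂ] H))ᗮ := by
  set E := LinearMap.ker ((A : H →L[ℂ] H) : H →ₗ[ℂ] H) with hE
  haveI : CompleteSpace E := (ContinuousLinearMap.isClosed_ker A).completeSpace_coe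
  -- bounded below on Eᗮ
  have hbb : ∃ c > (0:ℝ), ∀ x ∈ Eᗮ, c * ‖x‖ ≤ ‖A x‖ := by
    by_contra hcon
    push_neg at hcon
    have hseq : ∀ n : ℕ, ∃ y : H, y ∈ Eᗮ ∧ ‖y‖ = 1 ∧ ‖A y‖ < 1/(n+1) := by
      intro n
      obtain ⟨x, hxE, hx⟩ := hcon (1/(n+1)) (by positivity)
      have hxne : ‖x‖ ≠ 0 := by
        intro h0
        rw [h0, mul_zero] at hx
        exact absurd hx (not_lt.mpr (norm_nonneg _))
      refine ⟨((‖x‖⁻¹ : ℝ) : ℂ) • x, Eᗮ.smul_mem _ hxE, ?_, ?_⟩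
      · rw [norm_smul, Complex.norm_real, Real.norm_eq_abs, abs_of_nonneg (by positivity),
          inv_mul_cancel₀ hxne]
      · rw [map_smul, norm_smul, Complex.norm_real, Real.norm_eq_abs, abs_of_nonneg (by positivity)]
        calc ‖x‖⁻¹ * ‖A x‖ < ‖x‖⁻¹ * (1/(n+1) * ‖x‖) := by
              apply mul_lt_mul_of_pos_left hx
              exact inv_pos.mpr (lt_of_le_of_ne (norm_nonneg x) (Ne.symm hxne))
          _ = 1/(n+1) := by field_simp
    choose y hyE hy1 hyA using hseq
    obtain ⟨C, hCcpt, hC⟩ := hK.image_closedBall_subset_compact (𝕜₁ := ℂ) (f := K.toLinearMap) 1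
    have hKy : ∀ n, K (y n) ∈ C := fun n =>
      hC ⟨y n, by simp [mem_closedBall_zero_iff, (hy1 n).le], rfl⟩
    obtain ⟨w, hwC, φ, hφ, hconv⟩ := hCcpt.tendsto_subseq hKy
    -- y n + K (y n) → 0
    have hsum : Filter.Tendsto (fun n => y n + K (y n)) Filter.atTop (nhds 0) := by
      have heq : ∀ n, y n + K (y n) = adjoint A (A (y n)) := by
        intro n
        have := congrFun (congrArg (fun (T : H →L[ℂ] H) => (T : H → H)) hAK) (y n)
        simpa [ContinuousLinearMap.mul_apply, ContinuousLinearMap.add_apply] using this.symm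
      simp only [heq]
      have hb : Filter.Tendsto (fun n : ℕ => ‖adjoint A‖ * (1/(n+1) : ℝ)) Filter.atTop (nhds 0) := by
        have := tendsto_one_div_add_atTop_nhds_zero_nat (𝕜 := ℝ)
        simpa using this.const_mul ‖adjoint A‖
      apply squeeze_zero_norm _ hb
      intro n
      calc ‖adjoint A (A (y n))‖ ≤ ‖adjoint A‖ * ‖A (y n)‖ := le_opNorm _ _
        _ ≤ ‖adjoint A‖ * (1/(n+1)) := by
            exact mul_le_mul_of_nonneg_left (hyA n).le (norm_nonneg _)
    have hyconv : Filter.Tendsto (fun n => y (φ n)) Filter.atTop (nhds (-w)) := by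
      have h1 : Filter.Tendsto (fun n => y (φ n) + K (y (φ n))) Filter.atTop (nhds 0) :=
        hsum.comp hφ.tendsto_atTop
      have := h1.sub hconv
      simpa using this
    have hw1 : ‖(-w : H)‖ = 1 := by
      have h := hyconv.norm
      simp only [hy1] at h
      exact (tendsto_const_nhds_iff.mp h).symm
    have hwE : (-w : H) ∈ Eᗮ := by
      have hcl : IsClosed (Eᗮ : Set H) := Submodule.isClosed_orthogonal E
      exact hcl.mem_of_tendsto hyconv (Filter.Eventually.of_forall fun n => hyE _)
    have hAw : A (-w) = 0 := by
      have h1 : Filter.Tendsto (fun n => A (y (φ n))) Filter.atTop (nhds (A (-w))) :=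
        (A.continuous.tendsto _).comp hyconv
      have h2 : Filter.Tendsto (fun n => A (y (φ n))) Filter.atTop (nhds 0) := by
        apply squeeze_zero_norm (fun n => (hyA (φ n)).le)
        have hb := tendsto_one_div_add_atTop_nhds_zero_nat (𝕜 := ℝ)
        exact hb.comp hφ.tendsto_atTop
      exact tendsto_nhds_unique h1 h2
    have : (-w : H) = 0 := by
      have hker : (-w : H) ∈ E := by rwa [hE, LinearMap.mem_ker]
      have := hwE (-w) hker
      simpa [inner_self_eq_zero] using this
    rw [this] at hw1; simp at hw1
  obtain ⟨c, hc, hbb⟩ := hbb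
  -- range A closed
  have hcompl : CompleteSpace (Eᗮ : Submodule ℂ H) := (Submodule.isClosed_orthogonal E).completeSpace_coe
  set f : (Eᗮ : Submodule ℂ H) →L[ℂ] H := A.comp (Eᗮ.subtypeL) with hf
  have hanti : AntilipschitzWith (⟨c, hc.le⟩ : NNReal)⁻¹ f := by
    apply f.antilipschitz_of_bound
    intro x
    show ‖x‖ ≤ c⁻¹ * ‖f x‖
    rw [le_inv_mul_iff₀ hc]
    exact hbb x x.2
  have hclosed : IsClosed (Set.range f) := hanti.isClosed_range f.uniformContinuous
  have hrangeset : Set.range (f : ↥Eᗮ → H) = (LinearMap.range ((A : H →L[ℂ] H) : H →ₗ[ℂ] H) : Set H) := by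
    apply Set.Subset.antisymm
    · rintro _ ⟨x, rfl⟩
      exact ⟨x, rfl⟩
    · rintro _ ⟨x, rfl⟩
      refine ⟨⟨x - (orthogonalProjection E x : H), sub_starProjection_mem_orthogonal x⟩, ?_⟩
      show A (x - (orthogonalProjection E x : H)) = A x
      have hmem : ((orthogonalProjection E x : H)) ∈ LinearMap.ker ((A : H →L[ℂ] H) : H →ₗ[ℂ] H) := (orthogonalProjection E x).2
      have hA0 : A ((orthogonalProjection E x : H)) = 0 := LinearMap.mem_ker.mp hmem
      rw [map_sub, hA0, sub_zero]
  have hcl2 : IsClosed ((LinearMap.range ((A : H →L[ℂ] H) : H →ₗ[ℂ] H) : Submodule ℂ H) : Set H) := by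
    rw [← hrangeset]; exact hclosed
  have := ker_adjoint_eq_orth A
  rw [this, Submodule.orthogonal_orthogonal_eq_closure,
    IsClosed.submodule_topologicalClosure_eq hcl2]



/-- The bordered operator `(x,v) ↦ (B x + v, π x)`. -/
noncomputable def border (B : H →L[ℂ] H) (F : Submodule ℂ H) {E : Submodule ℂ H}
    (π : H →L[ℂ] ↥E) : (H × ↥F) →L[ℂ] (H × ↥E) :=
  (B.comp (ContinuousLinearMap.fst ℂ H ↥F) +
    F.subtypeL.comp (ContinuousLinearMap.snd ℂ H ↥F)).prod
    (π.comp (ContinuousLinearMap.fst ℂ H ↥F))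

lemma border_apply (B : H →L[ℂ] H) (F : Submodule ℂ H) {E : Submodule ℂ H}
    (π : H →L[ℂ] ↥E) (z : H × ↥F) :
    border B F π z = (B z.1 + (z.2 : H), π z.1) := rfl

lemma border_sub_norm (B B' : H →L[ℂ] H) (F : Submodule ℂ H) {E : Submodule ℂ H}
    (π : H →L[ℂ] ↥E) : ‖border B F π - border B' F π‖ ≤ ‖B - B'‖ := by
  apply ContinuousLinearMap.opNorm_le_bound _ (norm_nonneg _)
  intro z
  have : (border B F π - border B' F π) z = ((B - B') z.1, 0) := by
    simp [border_apply, Prod.ext_iff]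
  rw [this]
  rw [Prod.norm_def]
  simp only [norm_zero]
  refine max_le ?_ (by positivity)
  calc ‖(B - B') z.1‖ ≤ ‖B - B'‖ * ‖z.1‖ := le_opNorm _ _
    _ ≤ ‖B - B'‖ * ‖z‖ := by
        exact mul_le_mul_of_nonneg_left (norm_fst_le z) (norm_nonneg _)

lemma border_bij_near {E F : Submodule ℂ H} [CompleteSpace ↥E] [CompleteSpace ↥F]
    (A : H →L[ℂ] H) (π : H →L[ℂ] ↥E)
    (hA : Function.Bijective (border A F π)) :
    ∃ ε > (0:ℝ), ∀ B : H →L[ℂ] H, ‖B - A‖ < ε → Function.Bijective (border B F π) := by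
  set e := ContinuousLinearEquiv.ofBijective (border A F π)
    ((LinearMap.ker_eq_bot).mpr hA.injective)
    (LinearMap.range_eq_top.mpr hA.surjective) with he
  set s := ‖(e.symm : (H × ↥E) →L[ℂ] (H × ↥F))‖ with hs
  have hs0 : 0 ≤ s := norm_nonneg _
  refine ⟨(s + 1)⁻¹, by positivity, fun B hB => ?_⟩
  set N : (H × ↥F) →L[ℂ] (H × ↥F) :=
    (e.symm : (H × ↥E) →L[ℂ] (H × ↥F)).comp (border B F π) with hN
  have hid : (e.symm : (H × ↥E) →L[ℂ] (H × ↥F)).comp (border A F π) = 1 := by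
    apply ContinuousLinearMap.ext
    intro z
    show e.symm (border A F π z) = z
    have hz : border A F π z = e z := rfl
    rw [hz, e.symm_apply_apply]
  have h1N : ‖1 - N‖ < 1 := by
    have : (1 : (H × ↥F) →L[ℂ] (H × ↥F)) - N =
        (e.symm : (H × ↥E) →L[ℂ] (H × ↥F)).comp (border A F π - border B F π) := by
      rw [ContinuousLinearMap.comp_sub, hid, hN]
    rw [this]
    calc ‖(e.symm : (H × ↥E) →L[ℂ] (H × ↥F)).comp (border A F π - border B F π)‖
        ≤ s * ‖border A F π - border B F π‖ := opNorm_comp_le _ _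
      _ ≤ s * ‖A - B‖ := mul_le_mul_of_nonneg_left (border_sub_norm _ _ _ _) hs0
      _ = s * ‖B - A‖ := by rw [norm_sub_rev]
      _ < 1 := by
          calc s * ‖B - A‖ ≤ s * (s+1)⁻¹ := mul_le_mul_of_nonneg_left hB.le hs0
            _ < 1 := by
                rw [mul_inv_lt_iff₀ (by positivity)]
                linarith
  -- N is a unit, hence bijective
  have hNunit : IsUnit N := by
    have := (Units.oneSub (1 - N) h1N).isUnit
    simpa [sub_sub_cancel] using this
  have hNbij : Function.Bijective N := ContinuousLinearMap.isUnit_iff_bijective.mp hNunit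
  have hfun : ⇑(border B F π) = ⇑e ∘ ⇑N := by
    funext z
    show border B F π z = e (e.symm (border B F π z))
    rw [e.apply_symm_apply]
  rw [hfun]
  exact e.bijective.comp hNbij




set_option synthInstance.maxHeartbeats 1000000 in
set_option maxHeartbeats 1000000 in
lemma border_count {E F : Submodule ℂ H} [FiniteDimensional ℂ ↥E] [FiniteDimensional ℂ ↥F]
    (B : H →L[ℂ] H) (π : H →L[ℂ] ↥E)
    (hrange : LinearMap.range ((B : H →L[ℂ] H) : H →ₗ[ℂ] H) = (LinearMap.ker ((adjoint B : H →L[ℂ] H) : H →ₗ[ℂ] H))ᗮ)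
    (hbij : Function.Bijective (border B F π)) :
    FiniteDimensional ℂ (LinearMap.ker ((B : H →L[ℂ] H) : H →ₗ[ℂ] H)) ∧ FiniteDimensional ℂ (LinearMap.ker ((adjoint B : H →L[ℂ] H) : H →ₗ[ℂ] H)) ∧
      (Module.finrank ℂ (LinearMap.ker ((adjoint B : H →L[ℂ] H) : H →ₗ[ℂ] H)) : ℤ)
          - Module.finrank ℂ (LinearMap.ker ((B : H →L[ℂ] H) : H →ₗ[ℂ] H))
        = (Module.finrank ℂ ↥F : ℤ) - Module.finrank ℂ ↥E := by
  haveI hcK : CompleteSpace ↥(LinearMap.ker ((adjoint B : H →L[ℂ] H) : H →ₗ[ℂ] H)) :=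
    (ContinuousLinearMap.isClosed_ker (adjoint B)).completeSpace_coe
  -- (1) finite dimensionality of ker B
  set g1 : ↥(LinearMap.ker ((B : H →L[ℂ] H) : H →ₗ[ℂ] H)) →ₗ[ℂ] ↥E :=
    π.toLinearMap.comp (LinearMap.ker ((B : H →L[ℂ] H) : H →ₗ[ℂ] H)).subtype with hg1
  have hg1inj : Function.Injective g1 := by
    rintro ⟨x, hx⟩ ⟨y, hy⟩ h
    have hxy : π x = π y := h
    have h1 : border B F π (x, 0) = border B F π (y, 0) := by
      rw [border_apply, border_apply]
      simp only [LinearMap.mem_ker, ContinuousLinearMap.coe_coe] at hx hy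
      simp [hx, hy, hxy]
    have := hbij.injective h1
    exact Subtype.ext (congrArg Prod.fst this)
  haveI hFD1 : FiniteDimensional ℂ (LinearMap.ker ((B : H →L[ℂ] H) : H →ₗ[ℂ] H)) := FiniteDimensional.of_injective g1 hg1inj
  -- (2) the projection from F onto ker B†
  set ρ := orthogonalProjection (LinearMap.ker ((adjoint B : H →L[ℂ] H) : H →ₗ[ℂ] H)) with hρ
  set g2 : ↥F →ₗ[ℂ] ↥(LinearMap.ker ((adjoint B : H →L[ℂ] H) : H →ₗ[ℂ] H)) :=
    (ρ.toLinearMap).comp F.subtype with hg2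
  have hρB : ∀ x : H, ρ (B x) = 0 := by
    intro x
    apply Submodule.orthogonalProjectionOnto_eq_zero_iff.mpr
    rw [← hrange]
    exact ⟨x, rfl⟩
  have hg2surj : Function.Surjective g2 := by
    intro w
    obtain ⟨z, hz⟩ := hbij.surjective ((w : H), 0)
    have h1 : B z.1 + (z.2 : H) = (w : H) := by
      rw [border_apply] at hz
      exact congrArg Prod.fst hz
    refine ⟨z.2, ?_⟩
    have : ρ ((z.2 : H)) = ρ ((w : H)) - ρ (B z.1) := by
      rw [← map_sub]
      congr 1
      rw [← h1]; abel
    show ρ ((z.2 : H)) = w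
    rw [this, hρB, sub_zero, orthogonalProjection_mem_subspace_eq_self]
  haveI hFD2 : FiniteDimensional ℂ (LinearMap.ker ((adjoint B : H →L[ℂ] H) : H →ₗ[ℂ] H)) :=
    Module.Finite.of_surjective g2 hg2surj
  -- (3) rank-nullity for g2
  have hrank2 : Module.finrank ℂ ↥F
      = Module.finrank ℂ ↥(LinearMap.ker ((adjoint B : H →L[ℂ] H) : H →ₗ[ℂ] H)) + Module.finrank ℂ ↥(LinearMap.ker g2) := by
    have := LinearMap.finrank_range_add_finrank_ker g2
    rw [LinearMap.range_eq_top.mpr hg2surj, finrank_top] at this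
    omega
  -- identify ker g2 with comap F.subtype (range B)
  have hkerg2 : LinearMap.ker g2 = (LinearMap.range ((B : H →L[ℂ] H) : H →ₗ[ℂ] H)).comap F.subtype := by
    ext v
    rw [LinearMap.mem_ker, Submodule.mem_comap]
    show ρ ((v : H)) = 0 ↔ _
    rw [Submodule.orthogonalProjectionOnto_eq_zero_iff, ← hrange]
    rfl
  -- (4) the kernel of the first component
  set ψ : (H × ↥F) →L[ℂ] H := B.comp (ContinuousLinearMap.fst ℂ H ↥F) +
    F.subtypeL.comp (ContinuousLinearMap.snd ℂ H ↥F) with hψ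
  have hψapply : ∀ z : H × ↥F, ψ z = B z.1 + (z.2 : H) := fun z => rfl
  set W := LinearMap.ker (ψ : (H × ↥F) →ₗ[ℂ] H) with hW
  have hmemW : ∀ z : H × ↥F, z ∈ W ↔ B z.1 + (z.2 : H) = 0 := by
    intro z; rw [hW, LinearMap.mem_ker]; exact Iff.rfl
  have hborderW : ∀ z : H × ↥F, border B F π z = (ψ z, π z.1) := fun z => rfl
  -- χ : W ≃ E
  set χ : ↥W →ₗ[ℂ] ↥E := π.toLinearMap.comp ((LinearMap.fst ℂ H ↥F).comp W.subtype) with hχ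
  have hχinj : Function.Injective χ := by
    rintro ⟨z, hz⟩ ⟨z', hz'⟩ h
    have hpz : π z.1 = π z'.1 := h
    have h1 : border B F π z = border B F π z' := by
      rw [hborderW, hborderW, hpz]
      have hψeq : ψ z = ψ z' := by
        rw [hψapply, hψapply, (hmemW z).mp hz, (hmemW z').mp hz']
      rw [hψeq]
    exact Subtype.ext (hbij.injective h1)
  have hχsurj : Function.Surjective χ := by
    intro e0
    obtain ⟨z, hz⟩ := hbij.surjective (0, e0)
    rw [hborderW, Prod.ext_iff] at hz
    refine ⟨⟨z, (hmemW z).mpr (by rw [← hψapply]; exact hz.1)⟩, hz.2⟩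
  haveI hFDW : FiniteDimensional ℂ ↥W := FiniteDimensional.of_injective χ hχinj
  have hrankW : Module.finrank ℂ ↥W = Module.finrank ℂ ↥E :=
    (LinearEquiv.ofBijective χ ⟨hχinj, hχsurj⟩).finrank_eq
  -- ρ2 : W → F
  set ρ2 : ↥W →ₗ[ℂ] ↥F := (LinearMap.snd ℂ H ↥F).comp W.subtype with hρ2
  have hrankW2 : Module.finrank ℂ ↥W
      = Module.finrank ℂ ↥(LinearMap.range ρ2) + Module.finrank ℂ ↥(LinearMap.ker ρ2) :=
    (LinearMap.finrank_range_add_finrank_ker ρ2).symm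
  -- ker ρ2 ≃ ker B
  have hkerρ2 : Module.finrank ℂ ↥(LinearMap.ker ρ2) = Module.finrank ℂ ↥(LinearMap.ker ((B : H →L[ℂ] H) : H →ₗ[ℂ] H)) := by
    have hmem : ∀ w : ↥W, w ∈ LinearMap.ker ρ2 → ((w : H × ↥F).1 ∈ LinearMap.ker ((B : H →L[ℂ] H) : H →ₗ[ℂ] H)) := by
      rintro ⟨z, hzW⟩ hzk
      have h2 : z.2 = 0 := hzk
      have h1 := (hmemW z).mp hzW
      rw [h2] at h1
      simp only [ZeroMemClass.coe_zero, add_zero] at h1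
      exact LinearMap.mem_ker.mpr h1
    set k0 : ↥(LinearMap.ker ρ2) →ₗ[ℂ] ↥(LinearMap.ker ((B : H →L[ℂ] H) : H →ₗ[ℂ] H)) :=
      LinearMap.codRestrict (LinearMap.ker ((B : H →L[ℂ] H) : H →ₗ[ℂ] H))
        ((LinearMap.fst ℂ H ↥F).comp (W.subtype.comp (LinearMap.ker ρ2).subtype))
        (fun w => hmem w.1 w.2) with hk0
    have hk0inj : Function.Injective k0 := by
      rintro ⟨⟨z, hzW⟩, hzk⟩ ⟨⟨z', hzW'⟩, hzk'⟩ h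
      have h1 : z.1 = z'.1 := congrArg Subtype.val h
      have h2 : z.2 = z'.2 := by
        have hz2 : z.2 = 0 := hzk
        have hz2' : z'.2 = 0 := hzk'
        rw [hz2, hz2']
      exact Subtype.ext (Subtype.ext (Prod.ext h1 h2))
    have hk0surj : Function.Surjective k0 := by
      rintro ⟨x, hx⟩
      have hxW : ((x, 0) : H × ↥F) ∈ W := by
        rw [hmemW]
        simp only [LinearMap.mem_ker, ContinuousLinearMap.coe_coe] at hx
        simp [hx]
      refine ⟨⟨⟨(x, 0), hxW⟩, ?_⟩, rfl⟩
      show ((x, (0 : ↥F)) : H × ↥F).2 = 0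
      rfl
    exact (LinearEquiv.ofBijective k0 ⟨hk0inj, hk0surj⟩).finrank_eq
  -- range ρ2 = comap F.subtype (range B)
  have hrangeρ2 : LinearMap.range ρ2 = (LinearMap.range ((B : H →L[ℂ] H) : H →ₗ[ℂ] H)).comap F.subtype := by
    ext v
    rw [LinearMap.mem_range, Submodule.mem_comap]
    constructor
    · rintro ⟨⟨z, hzW⟩, rfl⟩
      have h1 := (hmemW z).mp hzW
      refine ⟨-z.1, ?_⟩
      show B (-z.1) = (z.2 : H)
      rw [map_neg]
      exact neg_eq_of_add_eq_zero_right h1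
    · rintro ⟨x, hx⟩
      have hzW : ((-x, v) : H × ↥F) ∈ W := by
        rw [hmemW]
        show B (-x) + (v : H) = 0
        rw [map_neg, show B x = (v : H) from hx]; simp
      exact ⟨⟨(-x, v), hzW⟩, rfl⟩
  -- put everything together
  refine ⟨hFD1, hFD2, ?_⟩
  have e1 : Module.finrank ℂ ↥E
      = Module.finrank ℂ ↥((LinearMap.range ((B : H →L[ℂ] H) : H →ₗ[ℂ] H)).comap F.subtype)
        + Module.finrank ℂ ↥(LinearMap.ker ((B : H →L[ℂ] H) : H →ₗ[ℂ] H)) := by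
    rw [← hrankW, hrankW2, hkerρ2, hrangeρ2]
  have e2 : Module.finrank ℂ ↥F
      = Module.finrank ℂ ↥(LinearMap.ker ((adjoint B : H →L[ℂ] H) : H →ₗ[ℂ] H))
        + Module.finrank ℂ ↥((LinearMap.range ((B : H →L[ℂ] H) : H →ₗ[ℂ] H)).comap F.subtype) := by
    rw [hrank2, hkerg2]
  omega




lemma border_base_bijective (A : H →L[ℂ] H)
    [CompleteSpace ↥(LinearMap.ker ((A : H →L[ℂ] H) : H →ₗ[ℂ] H))]
    (hrange : LinearMap.range ((A : H →L[ℂ] H) : H →ₗ[ℂ] H) = (LinearMap.ker ((adjoint A : H →L[ℂ] H) : H →ₗ[ℂ] H))ᗮ) :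
    Function.Bijective
      (border A (LinearMap.ker ((adjoint A : H →L[ℂ] H) : H →ₗ[ℂ] H)) (orthogonalProjection (LinearMap.ker ((A : H →L[ℂ] H) : H →ₗ[ℂ] H)))) := by
  haveI : CompleteSpace ↥(LinearMap.ker ((adjoint A : H →L[ℂ] H) : H →ₗ[ℂ] H)) :=
    (ContinuousLinearMap.isClosed_ker (adjoint A)).completeSpace_coe
  set E := LinearMap.ker ((A : H →L[ℂ] H) : H →ₗ[ℂ] H) with hE
  set F := LinearMap.ker ((adjoint A : H →L[ℂ] H) : H →ₗ[ℂ] H) with hF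
  constructor
  · -- injectivity
    intro z z' h
    suffices hsuff : ∀ w : H × ↥F, border A F (orthogonalProjection E) w = 0 → w = 0 by
      have : border A F (orthogonalProjection E) (z - z') = 0 := by
        rw [map_sub, h, sub_self]
      have := hsuff _ this
      exact sub_eq_zero.mp this
    intro w hw
    rw [border_apply, Prod.ext_iff] at hw
    obtain ⟨h1, h2⟩ := hw
    simp only [Prod.fst_zero, Prod.snd_zero] at h1 h2
    have hAw : A w.1 = -(w.2 : H) := eq_neg_of_add_eq_zero_left h1
    have hmem1 : A w.1 ∈ Fᗮ := by rw [← hrange]; exact ⟨w.1, rfl⟩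
    have hmem2 : -(w.2 : H) ∈ (F : Submodule ℂ H) := F.neg_mem w.2.2
    rw [hAw] at hmem1
    have hw2 : -(w.2 : H) = 0 := by
      have := (Submodule.mem_orthogonal _ _).mp hmem1 _ hmem2
      exact inner_self_eq_zero.mp this
    have hw2' : w.2 = 0 := by
      apply Subtype.ext
      simpa [neg_eq_zero] using hw2
    have hw1mem : w.1 ∈ E := by
      rw [hE, LinearMap.mem_ker]
      rw [hw2'] at hAw
      simpa using hAw
    have hw1 : w.1 = 0 := by
      have hself := orthogonalProjection_mem_subspace_eq_self (⟨w.1, hw1mem⟩ : ↥E)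
      rw [show ((⟨w.1, hw1mem⟩ : ↥E) : H) = w.1 from rfl] at hself
      rw [h2] at hself
      exact congrArg Subtype.val hself.symm
    exact Prod.ext hw1 hw2'
  · -- surjectivity
    rintro ⟨y, e⟩
    set v : ↥F := orthogonalProjection F y with hv
    have hyv : y - (v : H) ∈ Fᗮ := sub_starProjection_mem_orthogonal (K := F) y
    rw [← hrange] at hyv
    obtain ⟨x₀, hx₀⟩ := hyv
    set x : H := x₀ - ((orthogonalProjection E x₀ : H)) + (e : H) with hx
    refine ⟨(x, v), ?_⟩
    rw [border_apply]
    have hAx : A x = A x₀ := by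
      rw [hx, map_add, map_sub]
      have h1 : A ((orthogonalProjection E x₀ : H)) = 0 :=
        LinearMap.mem_ker.mp (orthogonalProjection E x₀).2
      have h2 : A ((e : H)) = 0 := LinearMap.mem_ker.mp e.2
      rw [h1, h2, sub_zero, add_zero]
    have hπx : orthogonalProjection E x = e := by
      rw [hx, map_add, map_sub]
      have h1 : orthogonalProjection E ((orthogonalProjection E x₀ : H))
          = orthogonalProjection E x₀ := orthogonalProjection_mem_subspace_eq_self _
      have h2 : orthogonalProjection E ((e : H)) = e :=
        orthogonalProjection_mem_subspace_eq_self _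
      rw [h1, h2, sub_self, zero_add]
    rw [hAx, hπx, show A x₀ = y - (v : H) from hx₀]
    simp



section
variable (P V : H →L[ℂ] H)

lemma sa_idem_inner (hPsa : IsSelfAdjoint P) (hPidem : P * P = P) (x : H) :
    ⟪P x, x⟫_ℂ = (‖P x‖ : ℂ) ^ 2 := by
  have h1 : P (P x) = P x := by
    have := congrFun (congrArg (fun T : H →L[ℂ] H => (T : H → H)) hPidem) x
    simpa [ContinuousLinearMap.mul_apply] using this
  have h2 : adjoint P = P := by
    rw [← ContinuousLinearMap.star_eq_adjoint]; exact hPsa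
  calc ⟪P x, x⟫_ℂ = ⟪P (P x), x⟫_ℂ := by rw [h1]
    _ = ⟪adjoint P (P x), x⟫_ℂ := by rw [h2]
    _ = ⟪P x, P x⟫_ℂ := adjoint_inner_left P x (P x)
    _ = (‖P x‖ : ℂ) ^ 2 := inner_self_eq_norm_sq_to_K (P x)

lemma sa_idem_norm_le (hPsa : IsSelfAdjoint P) (hPidem : P * P = P) (x : H) :
    ‖P x‖ ≤ ‖x‖ := by
  have h := sa_idem_inner P hPsa hPidem x
  have h2 : ‖P x‖^2 = ‖⟪P x, x⟫_ℂ‖ := by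
    rw [h]
    simp
  have h3 : ‖⟪P x, x⟫_ℂ‖ ≤ ‖P x‖ * ‖x‖ := norm_inner_le_norm _ _
  nlinarith [norm_nonneg (P x), norm_nonneg x]

lemma eig_structure (Q : H →L[ℂ] H) (hPsa : IsSelfAdjoint P) (hPidem : P * P = P)
    (hQsa : IsSelfAdjoint Q) (hQidem : Q * Q = Q) (x : H) (h : Q x - P x = x) :
    P x = 0 ∧ Q x = x := by
  have hin : ⟪Q x, x⟫_ℂ - ⟪P x, x⟫_ℂ = ⟪x, x⟫_ℂ := by
    rw [← inner_sub_left, h]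
  rw [sa_idem_inner P hPsa hPidem x, sa_idem_inner Q hQsa hQidem x,
    inner_self_eq_norm_sq_to_K] at hin
  have hre : (‖Q x‖:ℝ)^2 - ‖P x‖^2 = ‖x‖^2 := by
    have := congrArg Complex.re hin
    simpa [← Complex.ofReal_pow] using this
  have hQle : ‖Q x‖ ≤ ‖x‖ := sa_idem_norm_le Q hQsa hQidem x
  have hP0 : ‖P x‖ = 0 := by nlinarith [norm_nonneg (P x), norm_nonneg x, norm_nonneg (Q x)]
  have hPx : P x = 0 := norm_eq_zero.mp hP0
  refine ⟨hPx, ?_⟩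
  rw [hPx, sub_zero] at h
  exact h
end

section Ring
variable {R : Type*} [Ring R]

lemma ring1 (p u v : R) (hp : p*p = p) :
    (p*u*p + (1-p)) * (p*v*p + (1-p)) = 1 + p*(u*p*v - p)*p := by
  have h1 : (p*u*p + (1-p)) * (p*v*p + (1-p))
      = p*u*(p*p)*v*p + (p*u*p - p*u*(p*p)) + (p*v*p - (p*p)*v*p) + (1 - p - p + p*p) := by
    noncomm_ring
  have h2 : 1 + p*(u*p*v - p)*p = p*u*p*v*p + (1 - p*(p*p)) := by noncomm_ring
  simp only [hp] at h1 h2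
  rw [h1, h2]
  noncomm_ring

lemma ring2 (p u v : R) (hp : p*p = p) (hvu : v*u = 1) :
    (p*v*p + (1-p)) * (p*u*p + (1-p)) = 1 - p*v*(u*p*v - p)*u*p := by
  have h1 : (p*v*p + (1-p)) * (p*u*p + (1-p))
      = p*v*(p*p)*u*p + (p*v*p - p*v*(p*p)) + (p*u*p - (p*p)*u*p) + (1 - p - p + p*p) := by
    noncomm_ring
  have h2 : 1 - p*v*(u*p*v - p)*u*p = 1 - p*(v*u)*p*((v*u)*p) + p*v*p*u*p := by noncomm_ring
  simp only [hp, hvu, mul_one, one_mul] at h1 h2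
  rw [h1, h2]
  noncomm_ring

lemma ring3 (p u v : R) (hp : p*p = p) (hvu : v*u = 1) :
    (u*p*v)*(u*p*v) = u*p*v := by
  have h1 : (u*p*v)*(u*p*v) = u*(p*((v*u)*p))*v := by noncomm_ring
  rw [hvu, one_mul, hp] at h1
  exact h1
end Ring

section Ops
variable (P V : H →L[ℂ] H)

lemma hPP_apply (hPidem : P * P = P) : ∀ y, P (P y) = P y := fun y => by
  have := congrFun (congrArg (fun T : H →L[ℂ] H => (T : H → H)) hPidem) y
  simpa using this

lemma adjA_eq (hPsa : IsSelfAdjoint P) :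
    adjoint (P * V * P + (1 - P)) = P * adjoint V * P + (1 - P) := by
  rw [← ContinuousLinearMap.star_eq_adjoint, ← ContinuousLinearMap.star_eq_adjoint]
  simp only [star_add, star_sub, star_one, star_mul, hPsa.star_eq, mul_assoc]

lemma Qsa (hPsa : IsSelfAdjoint P) : IsSelfAdjoint (adjoint V * P * V) := by
  rw [IsSelfAdjoint]
  simp only [← ContinuousLinearMap.star_eq_adjoint, star_mul, star_star, hPsa.star_eq, mul_assoc]

lemma Qidem (hPidem : P * P = P) (hV2 : V * adjoint V = 1) :
    (adjoint V * P * V) * (adjoint V * P * V) = adjoint V * P * V :=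
  ring3 P (adjoint V) V hPidem hV2

lemma AstarA (hPsa : IsSelfAdjoint P) (hPidem : P * P = P) :
    adjoint (P * V * P + (1 - P)) * (P * V * P + (1 - P))
      = 1 + P * ((adjoint V * P * V) - P) * P := by
  rw [adjA_eq P V hPsa]
  exact ring1 P (adjoint V) V hPidem

lemma AAstar (hPsa : IsSelfAdjoint P) (hPidem : P * P = P) (hV2 : V * adjoint V = 1) :
    (P * V * P + (1 - P)) * adjoint (P * V * P + (1 - P))
      = 1 - P * V * ((adjoint V * P * V) - P) * adjoint V * P := by
  rw [adjA_eq P V hPsa]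
  exact ring2 P (adjoint V) V hPidem hV2

lemma mem_kerW_iff (W : H →L[ℂ] H) (hPidem : P * P = P) (x : H) :
    x ∈ LinearMap.ker ((P * W * P + (1 - P) : H →L[ℂ] H) : H →ₗ[ℂ] H) ↔ P x = x ∧ P (W x) = 0 := by
  have hPP := hPP_apply P hPidem
  rw [LinearMap.mem_ker, ContinuousLinearMap.coe_coe]
  have happ : (P * W * P + (1 - P)) x = P (W (P x)) + (x - P x) := by
    simp [ContinuousLinearMap.mul_apply]
  rw [happ]
  constructor
  · intro h
    have hP := congrArg P h
    rw [map_add, map_sub, map_zero, hPP (W (P x)), hPP x, sub_self, add_zero] at hP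
    rw [hP, zero_add] at h
    have hPx : P x = x := (sub_eq_zero.mp h).symm
    refine ⟨hPx, ?_⟩
    calc P (W x) = P (W (P x)) := by rw [hPx]
      _ = 0 := hP
  · rintro ⟨h1, h2⟩
    have h3 : P (W (P x)) = 0 := by
      calc P (W (P x)) = P (W x) := by rw [h1]
        _ = 0 := h2
    rw [h3, h1, sub_self, add_zero]
end Ops

end Helpers

section Kernels
variable {H : Type*} [NormedAddCommGroup H] [InnerProductSpace ℂ H] [CompleteSpace H]
variable (P V : H →L[ℂ] H)

lemma kerA_eq (hPsa : IsSelfAdjoint P) (hPidem : P * P = P)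
    (hV1 : adjoint V * V = 1) (hV2 : V * adjoint V = 1) :
    LinearMap.ker ((P * V * P + (1 - P) : H →L[ℂ] H) : H →ₗ[ℂ] H) = LinearMap.ker (((adjoint V * P * V - P) + 1 : H →L[ℂ] H) : H →ₗ[ℂ] H) := by
  have hv2 : ∀ y : H, V (adjoint V y) = y := fun y => by
    have := congrFun (congrArg (fun T : H →L[ℂ] H => (T : H → H)) hV2) y
    simpa [ContinuousLinearMap.mul_apply] using this
  ext x
  rw [mem_kerW_iff P V hPidem x, LinearMap.mem_ker, ContinuousLinearMap.coe_coe]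
  have happ : ((adjoint V * P * V - P) + 1) x = adjoint V (P (V x)) - P x + x := by
    simp [ContinuousLinearMap.mul_apply]
  rw [happ]
  constructor
  · rintro ⟨h1, h2⟩
    rw [h1, h2]
    simp
  · intro h
    have hQapp : (adjoint V * P * V) x = adjoint V (P (V x)) := by
      simp [ContinuousLinearMap.mul_apply]
    have h2 : (adjoint V * P * V) x - P x = -x := by
      rw [hQapp]
      exact eq_neg_of_add_eq_zero_left h
    have h3 : P x - (adjoint V * P * V) x = x := by
      rw [← neg_sub, h2, neg_neg]
    obtain ⟨hQ0, hPx⟩ := eig_structure (adjoint V * P * V) P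
      (Qsa P V hPsa) (Qidem P V hPidem hV2) hPsa hPidem x h3
    refine ⟨hPx, ?_⟩
    rw [hQapp] at hQ0
    calc P (V x) = V (adjoint V (P (V x))) := (hv2 _).symm
      _ = V 0 := by rw [hQ0]
      _ = 0 := map_zero V

lemma memD1_iff (hPsa : IsSelfAdjoint P) (hPidem : P * P = P)
    (hV1 : adjoint V * V = 1) (hV2 : V * adjoint V = 1) (y : H) :
    y ∈ LinearMap.ker (((adjoint V * P * V - P) - 1 : H →L[ℂ] H) : H →ₗ[ℂ] H)
      ↔ P y = 0 ∧ (adjoint V * P * V) y = y := by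
  rw [LinearMap.mem_ker, ContinuousLinearMap.coe_coe]
  have happ : ((adjoint V * P * V - P) - 1) y = (adjoint V * P * V) y - P y - y := by
    simp [ContinuousLinearMap.mul_apply]
  rw [happ]
  constructor
  · intro h
    have h2 : (adjoint V * P * V) y - P y = y := by
      rw [sub_eq_zero] at h
      exact h
    exact eig_structure P (adjoint V * P * V) hPsa hPidem
      (Qsa P V hPsa) (Qidem P V hPidem hV2) y h2
  · rintro ⟨h1, h2⟩
    rw [h1, h2, sub_zero, sub_self]

lemma kerAdj_finrank (hPsa : IsSelfAdjoint P) (hPidem : P * P = P)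
    (hV1 : adjoint V * V = 1) (hV2 : V * adjoint V = 1) :
    Module.finrank ℂ (LinearMap.ker ((adjoint (P * V * P + (1 - P)) : H →L[ℂ] H) : H →ₗ[ℂ] H))
      = Module.finrank ℂ (LinearMap.ker (((adjoint V * P * V - P) - 1 : H →L[ℂ] H) : H →ₗ[ℂ] H)) := by
  have hv1 : ∀ y : H, adjoint V (V y) = y := fun y => by
    have := congrFun (congrArg (fun T : H →L[ℂ] H => (T : H → H)) hV1) y
    simpa [ContinuousLinearMap.mul_apply] using this
  have hv2 : ∀ y : H, V (adjoint V y) = y := fun y => by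
    have := congrFun (congrArg (fun T : H →L[ℂ] H => (T : H → H)) hV2) y
    simpa [ContinuousLinearMap.mul_apply] using this
  rw [adjA_eq P V hPsa]
  have hQapp : ∀ y : H, (adjoint V * P * V) y = adjoint V (P (V y)) := fun y => by
    simp [ContinuousLinearMap.mul_apply]
  have hmem1 : ∀ x ∈ LinearMap.ker ((P * adjoint V * P + (1 - P) : H →L[ℂ] H) : H →ₗ[ℂ] H),
      adjoint V x ∈ LinearMap.ker (((adjoint V * P * V - P) - 1 : H →L[ℂ] H) : H →ₗ[ℂ] H) := by
    intro x hx
    obtain ⟨h1, h2⟩ := (mem_kerW_iff P (adjoint V) hPidem x).mp hx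
    rw [memD1_iff P V hPsa hPidem hV1 hV2]
    refine ⟨h2, ?_⟩
    rw [hQapp, hv2, h1]
  have hmem2 : ∀ y ∈ LinearMap.ker (((adjoint V * P * V - P) - 1 : H →L[ℂ] H) : H →ₗ[ℂ] H),
      V y ∈ LinearMap.ker ((P * adjoint V * P + (1 - P) : H →L[ℂ] H) : H →ₗ[ℂ] H) := by
    intro y hy
    obtain ⟨h1, h2⟩ := (memD1_iff P V hPsa hPidem hV1 hV2 y).mp hy
    rw [mem_kerW_iff P (adjoint V) hPidem]
    constructor
    · -- P (V y) = V y
      rw [hQapp] at h2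
      calc P (V y) = V (adjoint V (P (V y))) := (hv2 _).symm
        _ = V y := by rw [h2]
    · rw [hv1, h1]
  set f : ↥(LinearMap.ker ((P * adjoint V * P + (1 - P) : H →L[ℂ] H) : H →ₗ[ℂ] H))
      →ₗ[ℂ] ↥(LinearMap.ker (((adjoint V * P * V - P) - 1 : H →L[ℂ] H) : H →ₗ[ℂ] H)) :=
    (adjoint V).toLinearMap.restrict hmem1 with hf
  set g : ↥(LinearMap.ker (((adjoint V * P * V - P) - 1 : H →L[ℂ] H) : H →ₗ[ℂ] H))
      →ₗ[ℂ] ↥(LinearMap.ker ((P * adjoint V * P + (1 - P) : H →L[ℂ] H) : H →ₗ[ℂ] H)) :=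
    V.toLinearMap.restrict hmem2 with hg
  have hfg : ∀ y, f (g y) = y := by
    rintro ⟨y, hy⟩
    apply Subtype.ext
    show adjoint V (V y) = y
    exact hv1 y
  have hgf : ∀ x, g (f x) = x := by
    rintro ⟨x, hx⟩
    apply Subtype.ext
    show V (adjoint V x) = x
    exact hv2 x
  exact LinearEquiv.finrank_eq
    { toFun := f, map_add' := f.map_add, map_smul' := f.map_smul,
      invFun := g, left_inv := hgf, right_inv := hfg }
end Kernels

set_option maxHeartbeats 4000000 in
set_option synthInstance.maxHeartbeats 1000000 in
/-- Let `P` be an orthogonal projection and `t ↦ U t`, `t ∈ [0,1]`, a norm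
continuous family of unitary operators such that each flux `Φ t = (U t)* P (U t) − P` is
compact. Then the eigenspaces `ker(Φ t ∓ 1)` are finite dimensional and the integer index
`ind(Φ t) = dim ker(Φ t − 1) − dim ker(Φ t + 1)` is constant on `[0,1]`. -/
theorem stmt_8 {H : Type*} [NormedAddCommGroup H] [InnerProductSpace ℂ H] [CompleteSpace H]
    (P : H →L[ℂ] H) (hPsa : IsSelfAdjoint P) (hPidem : P * P = P)
    (U : ℝ → (H →L[ℂ] H))
    (hU1 : ∀ t ∈ Set.Icc (0 : ℝ) 1, adjoint (U t) * U t = 1)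
    (hU2 : ∀ t ∈ Set.Icc (0 : ℝ) 1, U t * adjoint (U t) = 1)
    (hcont : ContinuousOn U (Set.Icc (0 : ℝ) 1))
    (Φ : ℝ → (H →L[ℂ] H))
    (hΦ : ∀ t, Φ t = adjoint (U t) * P * U t - P)
    (hcpt : ∀ t ∈ Set.Icc (0 : ℝ) 1, IsCompactOperator (Φ t)) :
    (∀ t ∈ Set.Icc (0 : ℝ) 1,
      FiniteDimensional ℂ (LinearMap.ker ((Φ t - 1 : H →L[ℂ] H) : H →ₗ[ℂ] H)) ∧
      FiniteDimensional ℂ (LinearMap.ker ((Φ t + 1 : H →L[ℂ] H) : H →ₗ[ℂ] H))) ∧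
    (∀ s ∈ Set.Icc (0 : ℝ) 1, ∀ t ∈ Set.Icc (0 : ℝ) 1,
      (Module.finrank ℂ (LinearMap.ker ((Φ s - 1 : H →L[ℂ] H) : H →ₗ[ℂ] H)) : ℤ)
          - (Module.finrank ℂ (LinearMap.ker ((Φ s + 1 : H →L[ℂ] H) : H →ₗ[ℂ] H)) : ℤ)
        = (Module.finrank ℂ (LinearMap.ker ((Φ t - 1 : H →L[ℂ] H) : H →ₗ[ℂ] H)) : ℤ)
          - (Module.finrank ℂ (LinearMap.ker ((Φ t + 1 : H →L[ℂ] H) : H →ₗ[ℂ] H)) : ℤ)) := by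
  -- finite dimensionality of the eigenspaces
  have hFD : ∀ t ∈ Set.Icc (0 : ℝ) 1,
      FiniteDimensional ℂ (LinearMap.ker ((Φ t - 1 : H →L[ℂ] H) : H →ₗ[ℂ] H)) ∧
      FiniteDimensional ℂ (LinearMap.ker ((Φ t + 1 : H →L[ℂ] H) : H →ₗ[ℂ] H)) := by
    intro t ht
    constructor
    · refine fd_of_compact_eigen (Φ t) (hcpt t ht) 1 one_ne_zero _
        (ContinuousLinearMap.isClosed_ker _) (fun x hx => ?_)
      rw [LinearMap.mem_ker] at hx
      have : Φ t x - x = 0 := by simpa using hx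
      rw [one_smul]
      exact sub_eq_zero.mp this
    · refine fd_of_compact_eigen (Φ t) (hcpt t ht) (-1) (by norm_num) _
        (ContinuousLinearMap.isClosed_ker _) (fun x hx => ?_)
      rw [LinearMap.mem_ker] at hx
      have : Φ t x + x = 0 := by simpa using hx
      rw [neg_one_smul]
      exact eq_neg_of_add_eq_zero_left this
  refine ⟨hFD, ?_⟩
  -- the family of Fredholm-type operators
  set A : ℝ → (H →L[ℂ] H) := fun r => P * U r * P + (1 - P) with hA
  have hAr : ∀ r, A r = P * U r * P + (1 - P) := fun r => rfl
  -- algebraic facts for each r in the interval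
  have hA1 : ∀ r ∈ Set.Icc (0:ℝ) 1, adjoint (A r) * A r = 1 + (P * Φ r * P) := by
    intro r hr
    rw [hAr, hΦ r]
    exact AstarA P (U r) hPsa hPidem
  have hA2 : ∀ r ∈ Set.Icc (0:ℝ) 1,
      A r * adjoint (A r) = 1 + (-(P * U r * Φ r * adjoint (U r) * P)) := by
    intro r hr
    rw [hAr, hΦ r]
    rw [AAstar P (U r) hPsa hPidem (hU2 r hr)]
    noncomm_ring
  have hK1cpt : ∀ r ∈ Set.Icc (0:ℝ) 1, IsCompactOperator ⇑(P * Φ r * P) := by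
    intro r hr
    have h1 : (⇑(P * Φ r * P) : H → H) = (⇑P ∘ ⇑(Φ r)) ∘ ⇑P := by
      funext x; simp [ContinuousLinearMap.mul_apply]
    rw [h1]
    exact ((hcpt r hr).clm_comp P).comp_clm P
  have hK2cpt : ∀ r ∈ Set.Icc (0:ℝ) 1,
      IsCompactOperator ⇑(-(P * U r * Φ r * adjoint (U r) * P)) := by
    intro r hr
    have h1 : (⇑(-(P * U r * Φ r * adjoint (U r) * P)) : H → H)
        = fun x => -(((⇑(P * U r) ∘ ⇑(Φ r)) ∘ ⇑(adjoint (U r) * P)) x) := by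
      funext x; simp [ContinuousLinearMap.mul_apply]
    rw [h1]
    exact (((hcpt r hr).clm_comp (P * U r)).comp_clm (adjoint (U r) * P)).neg
  have hrange : ∀ r ∈ Set.Icc (0:ℝ) 1,
      LinearMap.range ((A r : H →L[ℂ] H) : H →ₗ[ℂ] H) = (LinearMap.ker ((adjoint (A r) : H →L[ℂ] H) : H →ₗ[ℂ] H))ᗮ := fun r hr =>
    range_eq_orth_of_compact (A r) _ (hK1cpt r hr) (hA1 r hr)
  have hkerA : ∀ r ∈ Set.Icc (0:ℝ) 1,
      LinearMap.ker ((A r : H →L[ℂ] H) : H →ₗ[ℂ] H) = LinearMap.ker ((Φ r + 1 : H →L[ℂ] H) : H →ₗ[ℂ] H) := by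
    intro r hr
    rw [hAr, hΦ r]
    exact kerA_eq P (U r) hPsa hPidem (hU1 r hr) (hU2 r hr)
  have hkerAdj : ∀ r ∈ Set.Icc (0:ℝ) 1,
      Module.finrank ℂ (LinearMap.ker ((adjoint (A r) : H →L[ℂ] H) : H →ₗ[ℂ] H))
        = Module.finrank ℂ (LinearMap.ker ((Φ r - 1 : H →L[ℂ] H) : H →ₗ[ℂ] H)) := by
    intro r hr
    rw [hAr, hΦ r]
    exact kerAdj_finrank P (U r) hPsa hPidem (hU1 r hr) (hU2 r hr)
  -- finite dimensionality of kernels of A r and its adjoint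
  have hFDkerA : ∀ r ∈ Set.Icc (0:ℝ) 1, FiniteDimensional ℂ (LinearMap.ker ((A r : H →L[ℂ] H) : H →ₗ[ℂ] H)) := by
    intro r hr
    rw [hkerA r hr]
    exact (hFD r hr).2
  have hFDkerAdj : ∀ r ∈ Set.Icc (0:ℝ) 1,
      FiniteDimensional ℂ (LinearMap.ker ((adjoint (A r) : H →L[ℂ] H) : H →ₗ[ℂ] H)) := by
    intro r hr
    refine fd_of_compact_eigen _ (hK2cpt r hr) (-1) (by norm_num) _
      (ContinuousLinearMap.isClosed_ker _) (fun x hx => ?_)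
    rw [LinearMap.mem_ker, ContinuousLinearMap.coe_coe] at hx
    have h0 : (A r * adjoint (A r)) x = 0 := by
      rw [ContinuousLinearMap.mul_apply, hx, map_zero]
    rw [hA2 r hr] at h0
    have : x + (-(P * U r * Φ r * adjoint (U r) * P)) x = 0 := by
      simpa using h0
    rw [neg_one_smul]
    exact eq_neg_of_add_eq_zero_right this
  -- continuity of A
  have hAcont : ContinuousOn A (Set.Icc (0:ℝ) 1) := by
    apply ContinuousOn.add
    · exact (continuousOn_const.mul hcont).mul continuousOn_const
    · exact continuousOn_const
  -- index as a function
  set ind : ℝ → ℤ := fun r =>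
    (Module.finrank ℂ (LinearMap.ker ((Φ r - 1 : H →L[ℂ] H) : H →ₗ[ℂ] H)) : ℤ)
      - (Module.finrank ℂ (LinearMap.ker ((Φ r + 1 : H →L[ℂ] H) : H →ₗ[ℂ] H)) : ℤ) with hind
  -- local constancy
  have hloc : ∀ t ∈ Set.Icc (0:ℝ) 1, ∃ ε > (0:ℝ),
      ∀ s ∈ Set.Icc (0:ℝ) 1, dist s t < ε → ind s = ind t := by
    intro t ht
    haveI hE : FiniteDimensional ℂ (LinearMap.ker ((A t : H →L[ℂ] H) : H →ₗ[ℂ] H)) := hFDkerA t ht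
    haveI hF : FiniteDimensional ℂ (LinearMap.ker ((adjoint (A t) : H →L[ℂ] H) : H →ₗ[ℂ] H)) := hFDkerAdj t ht
    haveI : CompleteSpace ↥(LinearMap.ker ((A t : H →L[ℂ] H) : H →ₗ[ℂ] H)) := FiniteDimensional.complete ℂ _
    haveI : CompleteSpace ↥(LinearMap.ker ((adjoint (A t) : H →L[ℂ] H) : H →ₗ[ℂ] H)) := FiniteDimensional.complete ℂ _
    have hbase := border_base_bijective (A t) (hrange t ht)
    obtain ⟨ε, hε, hnear⟩ := border_bij_near (A t) (orthogonalProjection (LinearMap.ker ((A t : H →L[ℂ] H) : H →ₗ[ℂ] H))) hbase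
    -- continuity gives a δ
    have hct := hAcont t ht
    rw [Metric.continuousWithinAt_iff] at hct
    obtain ⟨δ, hδ, hδprop⟩ := hct ε hε
    refine ⟨δ, hδ, fun s hs hst => ?_⟩
    have hAs : ‖A s - A t‖ < ε := by
      rw [← dist_eq_norm]
      exact hδprop hs hst
    have hAt : ‖A t - A t‖ < ε := by simpa using hε
    obtain ⟨_, _, hcount_s⟩ := border_count (A s)
      (orthogonalProjection (LinearMap.ker ((A t : H →L[ℂ] H) : H →ₗ[ℂ] H))) (hrange s hs) (hnear (A s) hAs)
    obtain ⟨_, _, hcount_t⟩ := border_count (A t)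
      (orthogonalProjection (LinearMap.ker ((A t : H →L[ℂ] H) : H →ₗ[ℂ] H))) (hrange t ht) (hnear (A t) hAt)
    have hs' : ind s = (Module.finrank ℂ (LinearMap.ker ((adjoint (A s) : H →L[ℂ] H) : H →ₗ[ℂ] H)) : ℤ)
        - Module.finrank ℂ (LinearMap.ker ((A s : H →L[ℂ] H) : H →ₗ[ℂ] H)) := by
      rw [hind]
      rw [hkerAdj s hs, hkerA s hs]
    have ht' : ind t = (Module.finrank ℂ (LinearMap.ker ((adjoint (A t) : H →L[ℂ] H) : H →ₗ[ℂ] H)) : ℤ)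
        - Module.finrank ℂ (LinearMap.ker ((A t : H →L[ℂ] H) : H →ₗ[ℂ] H)) := by
      rw [hind]
      rw [hkerAdj t ht, hkerA t ht]
    rw [hs', ht', hcount_s, hcount_t]
  -- conclude by connectedness of the interval
  intro s hs t ht
  show ind s = ind t
  by_contra hne
  choose! ε hεpos hεprop using hloc
  set u : Set ℝ := ⋃ r ∈ {r | r ∈ Set.Icc (0:ℝ) 1 ∧ ind r = ind s}, Metric.ball r (ε r) with hu
  set v : Set ℝ := ⋃ r ∈ {r | r ∈ Set.Icc (0:ℝ) 1 ∧ ind r ≠ ind s}, Metric.ball r (ε r) with hv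
  have hou : IsOpen u := isOpen_biUnion fun _ _ => Metric.isOpen_ball
  have hov : IsOpen v := isOpen_biUnion fun _ _ => Metric.isOpen_ball
  have hcover : Set.Icc (0:ℝ) 1 ⊆ u ∪ v := by
    intro r hr
    by_cases hcase : ind r = ind s
    · exact Or.inl (Set.mem_biUnion ⟨hr, hcase⟩ (Metric.mem_ball_self (hεpos r hr)))
    · exact Or.inr (Set.mem_biUnion ⟨hr, hcase⟩ (Metric.mem_ball_self (hεpos r hr)))
  have hsu : (Set.Icc (0:ℝ) 1 ∩ u).Nonempty :=
    ⟨s, hs, Set.mem_biUnion ⟨hs, rfl⟩ (Metric.mem_ball_self (hεpos s hs))⟩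
  have htv : (Set.Icc (0:ℝ) 1 ∩ v).Nonempty :=
    ⟨t, ht, Set.mem_biUnion ⟨ht, fun h => hne h.symm⟩ (Metric.mem_ball_self (hεpos t ht))⟩
  obtain ⟨z, hzI, hzu, hzv⟩ := isPreconnected_Icc u v hou hov hcover hsu htv
  obtain ⟨r₁, hr₁, hz₁⟩ := Set.mem_iUnion₂.mp hzu
  obtain ⟨r₂, hr₂, hz₂⟩ := Set.mem_iUnion₂.mp hzv
  have h1 : ind z = ind r₁ := hεprop r₁ hr₁.1 z hzI (Metric.mem_ball.mp hz₁)
  have h2 : ind z = ind r₂ := hεprop r₂ hr₂.1 z hzI (Metric.mem_ball.mp hz₂)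
  exact hr₂.2 (by rw [← h2, h1, hr₁.2])
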